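/- The function M is differentiable at 0 and (1/μ)·M′(0) equals: (2Bρ² + 2(1+B)ρ + B + 2) / (μ·(Bρ² + (1+B)ρ)) if ρ = β, and (β^{B+2}(2ρ²+2ρ+1) − ρ^{B+2}(2β²+2β+1)) / (μ·(β^{B+2}(ρ²+ρ) − ρ^{B+2}(β²+β))) if ρ ≠ β. -/

import Mathlib

/-- First moment of AoI for LCFS-NP (EH only when system is empty), from the MGF. -/
theorem stmt_3 (rho beta mu : ℝ) (hrho : 0 < rho) (hbeta : 0 < beta) (hmu : 0 < mu)
    (B : ℕ) (hB : 1 ≤ B)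
    (theta pi1 : ℝ)
    (htheta : theta = if rho = beta then (B : ℝ)
      else beta * (beta ^ B - rho ^ B) / (rho ^ B * (beta - rho)))
    (hpi1 : pi1 = if rho = beta then 1 / (1 + (B : ℝ) * (1 + rho))
      else rho ^ B * (beta - rho) /
        (rho ^ B * (beta - rho) + beta * (1 + rho) * (beta ^ B - rho ^ B)))
    (M : ℝ → ℝ)
    (hM : ∀ x, M x = rho * pi1 * (x ^ 2 * theta - x * theta * (1 + rho + beta)
        + beta * (1 + theta + theta * rho))
      / ((1 - x) ^ 2 * (rho - x) * (beta - x))) :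
    DifferentiableAt ℝ M 0 ∧
    (1 / mu) * deriv M 0 =
      if rho = beta then
        (2 * (B : ℝ) * rho ^ 2 + 2 * (1 + (B : ℝ)) * rho + (B : ℝ) + 2)
          / (mu * ((B : ℝ) * rho ^ 2 + (1 + (B : ℝ)) * rho))
      else
        (beta ^ (B + 2) * (2 * rho ^ 2 + 2 * rho + 1)
            - rho ^ (B + 2) * (2 * beta ^ 2 + 2 * beta + 1))
          / (mu * (beta ^ (B + 2) * (rho ^ 2 + rho) - rho ^ (B + 2) * (beta ^ 2 + beta))) := by
  have hMfun : M = fun x => (rho * pi1 * (x ^ 2 * theta - x * theta * (1 + rho + beta)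
      + beta * (1 + theta + theta * rho))) / ((1 - x) ^ 2 * (rho - x) * (beta - x)) :=
    funext hM
  -- derivative of numerator at 0
  have hf : HasDerivAt (fun x : ℝ => rho * pi1 * (x ^ 2 * theta - x * theta * (1 + rho + beta)
      + beta * (1 + theta + theta * rho)))
      (rho * pi1 * (-(theta * (1 + rho + beta)))) 0 := by
    have h1 : HasDerivAt (fun x : ℝ => x ^ 2 * theta) ((2 * (0:ℝ) ^ 1) * theta) 0 :=
      (hasDerivAt_pow 2 0).mul_const theta
    have h2 : HasDerivAt (fun x : ℝ => x * (theta * (1 + rho + beta)))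
        (1 * (theta * (1 + rho + beta))) 0 := (hasDerivAt_id 0).mul_const _
    have h3 := ((h1.sub h2).add_const (beta * (1 + theta + theta * rho))).const_mul (rho * pi1)
    refine (h3.congr_deriv (by norm_num)).congr_of_eventuallyEq
      (Filter.Eventually.of_forall fun x => ?_)
    simp only [Pi.sub_apply]
    ring
  -- derivative of denominator at 0
  have hg : HasDerivAt (fun x : ℝ => (1 - x) ^ 2 * (rho - x) * (beta - x))
      (-(2 * rho * beta) - beta - rho) 0 := by
    have h1 : HasDerivAt (fun x : ℝ => (1 - x) ^ 2)
        (((2:ℕ) * (1 - (0:ℝ)) ^ 1) * (-1)) 0 :=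
      (((hasDerivAt_id (0:ℝ)).const_sub 1)).pow 2
    have h2 : HasDerivAt (fun x : ℝ => rho - x) (-1) 0 := (hasDerivAt_id (0:ℝ)).const_sub rho
    have h3 : HasDerivAt (fun x : ℝ => beta - x) (-1) 0 := (hasDerivAt_id (0:ℝ)).const_sub beta
    have := (h1.mul h2).mul h3
    refine (this.congr_deriv ?_).congr_of_eventuallyEq (Filter.Eventually.of_forall fun x => rfl)
    simp only [Pi.mul_apply]
    push_cast
    ring
  have hg0 : ((1 - (0:ℝ)) ^ 2 * (rho - 0) * (beta - 0)) ≠ 0 := by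
    simp only [sub_zero]
    positivity
  have hder := hf.div hg hg0
  constructor
  · rw [hMfun]; exact hder.differentiableAt
  · rw [hMfun]; erw [hder.deriv]
    simp only [sub_zero, one_pow, one_mul]
    by_cases hrb : rho = beta
    · simp only [hrb, if_true] at htheta hpi1 ⊢
      subst hrb
      have hBpos : (0:ℝ) < (B:ℝ) := by exact_mod_cast Nat.pos_of_ne_zero (by omega)
      have hd1 : (1 + (B:ℝ) * (1 + rho)) ≠ 0 := by positivity
      have hd2 : (B:ℝ) * rho ^ 2 + (1 + (B:ℝ)) * rho ≠ 0 := by positivity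
      rw [htheta, hpi1]
      field_simp
      ring
    · simp only [hrb, if_false] at htheta hpi1 ⊢
      have hbr : beta - rho ≠ 0 := sub_ne_zero.mpr (Ne.symm hrb)
      have hpB : (0:ℝ) < rho ^ B := pow_pos hrho B
      have hqB : (0:ℝ) < beta ^ B := pow_pos hbeta B
      have hmono : ∀ x y : ℝ, 0 < x → x < y → x ^ B < y ^ B := by
        intro x y hx hxy
        exact pow_lt_pow_left₀ hxy hx.le (by omega)
      have hd1 : rho ^ B * (beta - rho) ≠ 0 := mul_ne_zero (ne_of_gt hpB) hbr
      have hd2 : rho ^ B * (beta - rho) + beta * (1 + rho) * (beta ^ B - rho ^ B) ≠ 0 := by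
        rcases lt_or_gt_of_ne hrb with h | h
        · have h1 := hmono rho beta hrho h
          have t1 : 0 < rho ^ B * (beta - rho) := mul_pos hpB (by linarith)
          have t2 : 0 < beta * (1 + rho) * (beta ^ B - rho ^ B) :=
            mul_pos (mul_pos hbeta (by linarith)) (by linarith)
          linarith
        · have h1 := hmono beta rho hbeta h
          have t1 : rho ^ B * (beta - rho) < 0 :=
            mul_neg_of_pos_of_neg hpB (by linarith)
          have t2 : beta * (1 + rho) * (beta ^ B - rho ^ B) < 0 :=
            mul_neg_of_pos_of_neg (mul_pos hbeta (by linarith)) (by linarith)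
          linarith
      have hd3 : beta ^ (B + 2) * (rho ^ 2 + rho) - rho ^ (B + 2) * (beta ^ 2 + beta) ≠ 0 := by
        rw [pow_add, pow_add]
        have key : beta ^ B * beta ^ 2 * (rho ^ 2 + rho) - rho ^ B * rho ^ 2 * (beta ^ 2 + beta)
            = rho * beta * (rho * beta * (beta ^ B - rho ^ B)
              + (beta ^ B * beta - rho ^ B * rho)) := by ring
        rw [key]
        rcases lt_or_gt_of_ne hrb with h | h
        · have h1 := hmono rho beta hrho h
          have h2 : rho ^ B * rho < beta ^ B * beta := mul_lt_mul'' h1 h hpB.le hrho.le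
          have : 0 < rho * beta * (rho * beta * (beta ^ B - rho ^ B)
              + (beta ^ B * beta - rho ^ B * rho)) := by
            apply mul_pos (mul_pos hrho hbeta)
            have := mul_pos (mul_pos hrho hbeta) (sub_pos.mpr h1)
            linarith
          exact this.ne'
        · have h1 := hmono beta rho hbeta h
          have h2 : beta ^ B * beta < rho ^ B * rho := mul_lt_mul'' h1 h hqB.le hbeta.le
          have : rho * beta * (rho * beta * (beta ^ B - rho ^ B)
              + (beta ^ B * beta - rho ^ B * rho)) < 0 := by
            apply mul_neg_of_pos_of_neg (mul_pos hrho hbeta)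
            have := mul_neg_of_pos_of_neg (mul_pos hrho hbeta) (sub_neg.mpr h1)
            linarith
          exact this.ne
      clear hM hMfun hf hg hder hg0
      rw [htheta, hpi1]
      simp only [pow_add] at hd3 ⊢
      generalize rho ^ B = p at hpB hd1 hd2 hd3 ⊢
      generalize beta ^ B = q at hqB hd2 hd3 ⊢
      have hd4 : beta * q * (rho + 1) - rho * p * (beta + 1) ≠ 0 := by
        intro h; apply hd3; linear_combination rho * beta * h
      set_option maxHeartbeats 2000000 in
      field_simp [hd1, hd2, hd3, hd4, hpB.ne', hmu.ne', hrho.ne', hbeta.ne', hbr]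
      set_option maxHeartbeats 4000000 in
      ring1
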